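/- For every real number α < 1/2, there exists N such that for all n > N there is a simple graph G on n vertices with ℓ_perm(G) > α·n. -/

import Mathlib

/-- The permutation letter graph of a word `w` with respect to a permutation `π`, an
inversion decoder `I` and a noninversion decoder `N`. -/
def permLetterGraph {A : Type} (I N : Set (A × A)) {n : ℕ} (π : Equiv.Perm (Fin n))
    (w : Fin n → A) : SimpleGraph (Fin n) :=
  SimpleGraph.fromRel fun i j =>
    i < j ∧ ((π j < π i ∧ (w i, w j) ∈ I) ∨ (π i < π j ∧ (w i, w j) ∈ N))

/-- `G` is a permutation `k`-letter graph. -/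
def IsKPermLetterGraph {V : Type*} (G : SimpleGraph V) (k : ℕ) : Prop :=
  ∃ (n : ℕ) (I N : Set (Fin k × Fin k)) (π : Equiv.Perm (Fin n)) (w : Fin n → Fin k),
    Nonempty (G ≃g permLetterGraph I N π w)

/-- The least `k` such that `G` is a permutation `k`-letter graph. -/
noncomputable def permLettericity {V : Type*} (G : SimpleGraph V) : ℕ :=
  sInf {k | IsKPermLetterGraph G k}

theorem isK_mono {V : Type*} {G : SimpleGraph V} {k k' : ℕ} (hkk : k ≤ k')
    (h : IsKPermLetterGraph G k) : IsKPermLetterGraph G k' := by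
  obtain ⟨n, I, N, π, w, ⟨e⟩⟩ := h
  set f : Fin k → Fin k' := Fin.castLE hkk with hf
  have hfi : Function.Injective (Prod.map f f) :=
    (Fin.castLE_injective hkk).prodMap (Fin.castLE_injective hkk)
  refine ⟨n, Prod.map f f '' I, Prod.map f f '' N, π, f ∘ w, ?_⟩
  have heq : permLetterGraph (Prod.map f f '' I) (Prod.map f f '' N) π (f ∘ w)
      = permLetterGraph I N π w := by
    unfold permLetterGraph
    congr 1
    funext i j
    have hI := hfi.mem_set_image (a := (w i, w j)) (s := I)
    have hN := hfi.mem_set_image (a := (w i, w j)) (s := N)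
    simp only [Prod.map_apply] at hI hN
    simp only [Function.comp_apply]
    rw [hI, hN]
  rw [heq]
  exact ⟨e⟩

theorem isK_self {n : ℕ} (G : SimpleGraph (Fin n)) : IsKPermLetterGraph G n := by
  refine ⟨n, ∅, {p | G.Adj p.1 p.2}, 1, id, ?_⟩
  have heq : permLetterGraph (∅ : Set (Fin n × Fin n)) {p | G.Adj p.1 p.2} 1 id = G := by
    ext a b
    simp only [permLetterGraph, SimpleGraph.fromRel_adj, Equiv.Perm.coe_one, id_eq,
      Set.mem_empty_iff_false, and_false, false_or, Set.mem_setOf_eq]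
    constructor
    · rintro ⟨hne, ⟨h1, h2, h3⟩ | ⟨h1, h2, h3⟩⟩
      · exact h3
      · exact h3.symm
    · intro h
      refine ⟨G.ne_of_adj h, ?_⟩
      rcases lt_or_gt_of_ne (G.ne_of_adj h) with hlt | hlt
      · exact Or.inl ⟨hlt, hlt, h⟩
      · exact Or.inr ⟨hlt, hlt, h.symm⟩
  rw [heq]
  exact ⟨⟨Equiv.refl _, Iff.rfl⟩⟩

theorem count_bound {n k : ℕ} (H : ∀ G : SimpleGraph (Fin n), IsKPermLetterGraph G k) :
    2 ^ n.choose 2 ≤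
      2 ^ (k * k) * (2 ^ (k * k) * (Nat.factorial n * (k ^ n * Nat.factorial n))) := by
  classical
  let D := Set (Fin k × Fin k) × Set (Fin k × Fin k) × Equiv.Perm (Fin n) ×
    (Fin n → Fin k) × Equiv.Perm (Fin n)
  let Φ : D → SimpleGraph (Fin n) := fun d =>
    SimpleGraph.comap d.2.2.2.2 (permLetterGraph d.1 d.2.1 d.2.2.1 d.2.2.2.1)
  have hsurj : Function.Surjective Φ := by
    intro G
    obtain ⟨n', I, N, π, w, ⟨e⟩⟩ := H G
    have hn : n = n' := Fin.equiv_iff_eq.mp ⟨e.toEquiv⟩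
    subst hn
    refine ⟨⟨I, N, π, w, e.toEquiv⟩, ?_⟩
    ext a b
    exact e.map_rel_iff
  have h1 : Fintype.card (SimpleGraph (Fin n)) ≤ Fintype.card D :=
    Fintype.card_le_of_surjective Φ hsurj
  have h2 : Fintype.card D =
      2 ^ (k * k) * (2 ^ (k * k) * (Nat.factorial n * (k ^ n * Nat.factorial n))) := by
    simp [D, Fintype.card_prod, Fintype.card_set, Fintype.card_perm, Fintype.card_fun,
      Fintype.card_fin]
  -- lower bound on the number of graphs
  let ψ : Set {e : Sym2 (Fin n) // ¬ e.IsDiag} → SimpleGraph (Fin n) := fun S =>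
    SimpleGraph.fromEdgeSet (Subtype.val '' S)
  have hinj : Function.Injective ψ := by
    intro S T hST
    have hS : (Subtype.val '' S) \ {e : Sym2 (Fin n) | e.IsDiag} = Subtype.val '' S := by
      refine Set.Subset.antisymm Set.diff_subset fun e he => ⟨he, ?_⟩
      obtain ⟨x, -, rfl⟩ := he
      exact x.2
    have hT : (Subtype.val '' T) \ {e : Sym2 (Fin n) | e.IsDiag} = Subtype.val '' T := by
      refine Set.Subset.antisymm Set.diff_subset fun e he => ⟨he, ?_⟩
      obtain ⟨x, -, rfl⟩ := he
      exact x.2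
    have := congrArg SimpleGraph.edgeSet hST
    rw [SimpleGraph.edgeSet_fromEdgeSet, SimpleGraph.edgeSet_fromEdgeSet,
      Sym2.diagSet_eq_setOfPred_isDiag, hS, hT] at this
    exact Set.image_injective.mpr Subtype.val_injective this
  have h3 : 2 ^ n.choose 2 ≤ Fintype.card (SimpleGraph (Fin n)) := by
    have := Fintype.card_le_of_injective ψ hinj
    rwa [Fintype.card_set, Sym2.card_subtype_not_diag, Fintype.card_fin] at this
  calc 2 ^ n.choose 2 ≤ Fintype.card (SimpleGraph (Fin n)) := h3
    _ ≤ Fintype.card D := h1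
    _ = _ := h2

theorem two_mul_choose_two (n : ℕ) : 2 * n.choose 2 = n * (n - 1) := by
  cases n with
  | zero => rfl
  | succ t =>
    have he : 2 ∣ (t + 1) * t := by
      rcases Nat.even_mul_succ_self t with ⟨r, hr⟩
      exact ⟨r, by rw [Nat.mul_comm, hr]; ring⟩
    rw [Nat.choose_two_right, Nat.succ_sub_one, Nat.mul_div_cancel' he]

theorem sq_le_two_pow {s : ℕ} (hs : 4 ≤ s) : s * s ≤ 2 ^ s := by
  induction s with
  | zero => omega
  | succ t ih =>
    rcases Nat.lt_or_ge t 4 with h | h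
    · have ht : t = 3 := by omega
      subst ht; norm_num
    · have h0 := ih h
      have h1 : 2 * t + 1 ≤ t * t := by nlinarith
      have h2 : (t + 1) * (t + 1) ≤ 2 ^ t + 2 ^ t := by nlinarith
      have h3 : 2 ^ (t + 1) = 2 ^ t + 2 ^ t := by rw [pow_succ]; ring
      omega

theorem le_two_pow_sqrt {n : ℕ} (hn : 16 ≤ n) : n ≤ 2 ^ (Nat.sqrt n + 2) := by
  set s := Nat.sqrt n with hs
  have hs4 : 4 ≤ s := Nat.le_sqrt.mpr (by omega)
  have h1 : n < (s + 1) * (s + 1) := Nat.lt_succ_sqrt n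
  have h2 : s * s ≤ 2 ^ s := sq_le_two_pow hs4
  have h3 : (s + 1) * (s + 1) ≤ 4 * (s * s) := by nlinarith
  have h4 : 2 ^ (s + 2) = 4 * 2 ^ s := by rw [pow_add]; ring
  omega

theorem key_int (m k t s : ℤ) (hm : 1 ≤ m) (hk0 : 0 ≤ k) (hs4 : 4 ≤ s)
    (A : (2*m+1)*k + 1 ≤ m*(t+1)) (B : 21*((2*m+1)*(2*m+1))*s ≤ t+1) :
    4*(k*k) + 6*(t+1)*(s+2) + 2 ≤ (t+1)*t := by
  nlinarith [mul_le_mul A A (by positivity) (by nlinarith),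
    mul_le_mul_of_nonneg_right B (by nlinarith : (0:ℤ) ≤ t+1),
    sq_nonneg (m*(t+1) - (2*m+1)*k),
    mul_pos (by nlinarith : (0:ℤ) < (2*m+1)*(2*m+1)) (by nlinarith : (0:ℤ) < t+1),
    mul_nonneg (mul_nonneg (by linarith : (0:ℤ) ≤ m) (by linarith : (0:ℤ) ≤ s - 4))
      (by nlinarith : (0:ℤ) ≤ t+1)]

theorem numeric_lt {m n k : ℕ} (hm : 1 ≤ m) (hk : (2*m+1)*k < m*n)
    (hn : (21*((2*m+1)*(2*m+1))) * (21*((2*m+1)*(2*m+1))) < n) :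
    2 ^ (k*k) * (2 ^ (k*k) * (Nat.factorial n * (k ^ n * Nat.factorial n))) < 2 ^ n.choose 2 := by
  have hq1 : 1 ≤ (2*m+1)*(2*m+1) := Nat.one_le_iff_ne_zero.mpr (by positivity)
  have hn16 : 16 ≤ n := by nlinarith
  set s := Nat.sqrt n with hs
  have hs4 : 4 ≤ s := Nat.le_sqrt.mpr (by omega)
  have hsC : 21*((2*m+1)*(2*m+1)) ≤ s := Nat.le_sqrt.mpr (le_of_lt hn)
  have hss : s * s ≤ n := Nat.sqrt_le n
  have hkn : k ≤ n := by nlinarith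
  have hfact : Nat.factorial n ≤ n ^ n := Nat.factorial_le_pow n
  have hkpow : k ^ n ≤ n ^ n := Nat.pow_le_pow_left hkn n
  have hnpow : n ≤ 2 ^ (s + 2) := le_two_pow_sqrt hn16
  have hnn : n ^ n ≤ (2 ^ (s+2)) ^ n := Nat.pow_le_pow_left hnpow n
  have hexp : k*k + (k*k + ((s+2)*n + ((s+2)*n + (s+2)*n))) < n.choose 2 := by
    have h2c : 2 * n.choose 2 = n * (n - 1) := two_mul_choose_two n
    obtain ⟨t, rfl⟩ : ∃ t, n = t + 1 := ⟨n - 1, by omega⟩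
    have hB : 21*((2*m+1)*(2*m+1))*s ≤ t + 1 := le_trans (Nat.mul_le_mul_right s hsC) hss
    have key : 4*(k*k) + 6*(t+1)*(s+2) + 2 ≤ (t+1)*t := by
      have := key_int (m : ℤ) (k : ℤ) (t : ℤ) (s : ℤ) (by exact_mod_cast hm)
        (by positivity) (by exact_mod_cast hs4)
        (by exact_mod_cast hk) (by exact_mod_cast hB)
      exact_mod_cast this
    have h2c' : 2 * (t+1).choose 2 = (t+1) * t := by
      rw [h2c]; congr 1
    linarith [key, h2c']
  calc 2 ^ (k*k) * (2 ^ (k*k) * (Nat.factorial n * (k ^ n * Nat.factorial n)))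
      ≤ 2 ^ (k*k) * (2 ^ (k*k) * (n ^ n * (n ^ n * n ^ n))) := by gcongr
    _ ≤ 2 ^ (k*k) * (2 ^ (k*k) * ((2 ^ (s+2)) ^ n * ((2 ^ (s+2)) ^ n * (2 ^ (s+2)) ^ n))) := by
        gcongr
    _ = 2 ^ (k*k + (k*k + ((s+2)*n + ((s+2)*n + (s+2)*n)))) := by
        simp only [← pow_mul, ← pow_add]
    _ < 2 ^ n.choose 2 := Nat.pow_lt_pow_right (by norm_num) hexp

/-- For every `α < 1/2`, all sufficiently large `n` admit `n`-vertex graphs with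
permutation lettericity greater than `α·n`. -/
theorem exists_graph_large_permLettericity (α : ℝ) (hα : α < 1 / 2) :
    ∃ N : ℕ, ∀ n : ℕ, N < n →
      ∃ G : SimpleGraph (Fin n), α * n < (permLettericity G : ℝ) := by
  have h2α : (0:ℝ) < 1 - 2*α := by linarith
  set m : ℕ := ⌈α / (1 - 2*α)⌉₊ + 1 with hmdef
  have hm1 : 1 ≤ m := Nat.le_add_left 1 _
  have hmα : α * (2*(m:ℝ)+1) < m := by
    have h0 : (⌈α / (1 - 2*α)⌉₊ : ℝ) < m := by
      rw [hmdef]; push_cast; linarith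
    have h1 : α / (1 - 2*α) < m := lt_of_le_of_lt (Nat.le_ceil _) h0
    rw [div_lt_iff₀ h2α] at h1
    nlinarith
  refine ⟨(21*((2*m+1)*(2*m+1))) * (21*((2*m+1)*(2*m+1))), fun n hn => ?_⟩
  by_contra hcon
  push_neg at hcon
  set k : ℕ := ⌊α * n⌋₊ with hkdef
  have hK : ∀ G : SimpleGraph (Fin n), IsKPermLetterGraph G k := by
    intro G
    have hle : permLettericity G ≤ k := Nat.le_floor (hcon G)
    have hne : {j | IsKPermLetterGraph G j}.Nonempty := ⟨n, isK_self G⟩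
    exact isK_mono hle (Nat.sInf_mem hne)
  have hn0 : 0 < n := Nat.lt_of_le_of_lt (Nat.zero_le _) hn
  have hkn : (2*m+1)*k < m*n := by
    rcases le_or_gt 0 (α * n) with hc | hc
    · have h1 : (k:ℝ) ≤ α * n := Nat.floor_le hc
      have hnR : (0:ℝ) < n := by exact_mod_cast hn0
      have h3 : (2*(m:ℝ)+1) * k < m * n := by
        calc (2*(m:ℝ)+1) * k ≤ (2*m+1) * (α*n) := by
              apply mul_le_mul_of_nonneg_left h1; positivity
          _ = (α*(2*m+1)) * n := by ring
          _ < m * n := mul_lt_mul_of_pos_right hmα hnR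
      exact_mod_cast h3
    · have hk0 : k = 0 := by rw [hkdef]; exact Nat.floor_of_nonpos hc.le
      rw [hk0, Nat.mul_zero]
      exact Nat.mul_pos (by omega) hn0
  exact absurd (count_bound hK) (Nat.not_le.mpr (numeric_lt hm1 hkn hn))
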